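/- Fix M ≥ 1, probabilities θ_0,...,θ_M summing to 1, and (π_k)_{k=0}^K nonnegative summing to 1 (with π_j = 0 for j outside {0,...,K}). Let L = ∑_{k≥0} k · ∑_{m=0}^{M} θ_m π_{k+1-m} and Q = ∑_{k=0}^K k π_k. Then L = Q + θ_0·π_0 + ς, where ς = ∑_{m=1}^{M-1} m·θ_{m+1} − θ_0. -/

import Mathlib

open Finset

private lemma sum_range_int (n : ℕ) (f : ℤ → ℝ) :
    ∑ k ∈ Finset.range (n + 1), f (k : ℤ) = ∑ k ∈ Finset.Icc (0:ℤ) (n:ℤ), f k := by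
  have himg : Finset.Icc (0:ℤ) (n:ℤ) = (Finset.range (n+1)).image (fun k : ℕ => (k:ℤ)) := by
    ext x
    simp only [Finset.mem_Icc, Finset.mem_image, Finset.mem_range]
    constructor
    · rintro ⟨hx0, hxn⟩; exact ⟨x.toNat, by omega, by omega⟩
    · rintro ⟨a, ha, rfl⟩; omega
  rw [himg, Finset.sum_image (by intro a _ b _ h; exact_mod_cast (show (a:ℤ) = b from h))]

private lemma key_shift (K M m : ℕ) (hm : m ≤ M) (π : ℤ → ℝ)
    (hπout : ∀ j : ℤ, j < 0 ∨ (K : ℤ) < j → π j = 0) :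
    ∑ k ∈ Finset.Icc (0:ℤ) ((K:ℤ)+(M:ℤ)), (k:ℝ) * π (k + 1 - m) =
      (∑ j ∈ Finset.Icc (0:ℤ) (K:ℤ), ((j:ℝ) + m - 1) * π j) + π (-(m:ℤ)) := by
  have hins : Finset.Icc (-1:ℤ) ((K:ℤ)+(M:ℤ)) =
      insert (-1) (Finset.Icc (0:ℤ) ((K:ℤ)+(M:ℤ))) := by
    ext x; simp only [Finset.mem_Icc, Finset.mem_insert]; omega
  have hnotmem : (-1:ℤ) ∉ Finset.Icc (0:ℤ) ((K:ℤ)+(M:ℤ)) := by simp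
  have hbig : ∑ k ∈ Finset.Icc (-1:ℤ) ((K:ℤ)+(M:ℤ)), (k:ℝ) * π (k + 1 - m) =
      (-1:ℝ) * π (-(m:ℤ)) + ∑ k ∈ Finset.Icc (0:ℤ) ((K:ℤ)+(M:ℤ)), (k:ℝ) * π (k + 1 - m) := by
    rw [hins, Finset.sum_insert hnotmem]
    have h1 : (-1 + 1 - (m:ℤ)) = -(m:ℤ) := by omega
    rw [h1]
    norm_num
  have hsub : Finset.Icc ((m:ℤ)-1) ((m:ℤ)-1+(K:ℤ)) ⊆ Finset.Icc (-1:ℤ) ((K:ℤ)+(M:ℤ)) := by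
    intro x hx
    simp only [Finset.mem_Icc] at hx ⊢
    omega
  have hrestrict : ∑ k ∈ Finset.Icc (-1:ℤ) ((K:ℤ)+(M:ℤ)), (k:ℝ) * π (k + 1 - m) =
      ∑ k ∈ Finset.Icc ((m:ℤ)-1) ((m:ℤ)-1+(K:ℤ)), (k:ℝ) * π (k + 1 - m) := by
    refine (Finset.sum_subset hsub fun x hx hx' => ?_).symm
    simp only [Finset.mem_Icc] at hx hx'
    have : π (x + 1 - m) = 0 := hπout _ (by omega)
    rw [this, mul_zero]
  have hmap : ∑ k ∈ Finset.Icc ((m:ℤ)-1) ((m:ℤ)-1+(K:ℤ)), (k:ℝ) * π (k + 1 - m) =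
      ∑ j ∈ Finset.Icc (0:ℤ) (K:ℤ), ((j:ℝ) + m - 1) * π j := by
    have := Finset.map_add_left_Icc (0:ℤ) (K:ℤ) ((m:ℤ)-1)
    rw [show ((m:ℤ)-1+0 : ℤ) = (m:ℤ)-1 by ring] at this
    rw [← this, Finset.sum_map]
    refine Finset.sum_congr rfl fun j _ => ?_
    simp only [addLeftEmbedding_apply]
    have h1 : ((m:ℤ) - 1 + j + 1 - m : ℤ) = j := by ring
    rw [h1]
    push_cast
    ring_nf
  have := hbig.symm.trans (hrestrict.trans hmap)
  linarith

/-- The identity `L = Q + θ₀ π₀ + ς` underlying the equivalence of the two LP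
formulations (Lemma 3). -/
theorem stmt_3 (M K : ℕ) (hM : 1 ≤ M)
    (θ : ℕ → ℝ) (hθ0 : ∀ m, 0 ≤ θ m)
    (hθsum : ∑ m ∈ Finset.range (M + 1), θ m = 1)
    (π : ℤ → ℝ) (hπ0 : ∀ j, 0 ≤ π j)
    (hπout : ∀ j : ℤ, j < 0 ∨ (K : ℤ) < j → π j = 0)
    (hπsum : ∑ k ∈ Finset.Icc (0:ℤ) (K:ℤ), π k = 1)
    (L Q ς : ℝ)
    (hL : L = ∑ k ∈ Finset.range (K + M + 1), (k : ℝ) *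
        (∑ m ∈ Finset.range (M + 1), θ m * π ((k : ℤ) + 1 - (m : ℤ))))
    (hQ : Q = ∑ k ∈ Finset.Icc (0:ℤ) (K:ℤ), (k : ℝ) * π k)
    (hς : ς = (∑ m ∈ Finset.Icc 1 (M - 1), (m : ℝ) * θ (m + 1)) - θ 0) :
    L = Q + θ 0 * π 0 + ς := by
  -- Step 1: swap the sums in L
  have hL1 : L = ∑ m ∈ Finset.range (M+1), θ m *
      ∑ k ∈ Finset.range (K + M + 1), (k:ℝ) * π ((k:ℤ) + 1 - m) := by
    rw [hL]
    simp_rw [Finset.mul_sum]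
    rw [Finset.sum_comm]
    refine Finset.sum_congr rfl fun m _ => Finset.sum_congr rfl fun k _ => by ring
  -- Step 2: evaluate each inner sum using key_shift
  have hL2 : L = ∑ m ∈ Finset.range (M+1), θ m *
      ((∑ j ∈ Finset.Icc (0:ℤ) (K:ℤ), ((j:ℝ) + m - 1) * π j) + π (-(m:ℤ))) := by
    rw [hL1]
    refine Finset.sum_congr rfl fun m hm => ?_
    simp only [Finset.mem_range] at hm
    congr 1
    have hconv := sum_range_int (K + M) (fun k => (k:ℝ) * π (k + 1 - m))
    push_cast at hconv ⊢
    rw [hconv]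
    exact key_shift K M m (by omega) π hπout
  -- Step 3: evaluate inner j-sum
  have hinner : ∀ m : ℕ, (∑ j ∈ Finset.Icc (0:ℤ) (K:ℤ), ((j:ℝ) + m - 1) * π j)
      = Q + ((m:ℝ) - 1) := by
    intro m
    have : ∑ j ∈ Finset.Icc (0:ℤ) (K:ℤ), ((j:ℝ) + m - 1) * π j
        = (∑ j ∈ Finset.Icc (0:ℤ) (K:ℤ), (j:ℝ) * π j)
          + ((m:ℝ) - 1) * ∑ j ∈ Finset.Icc (0:ℤ) (K:ℤ), π j := by
      rw [Finset.mul_sum, ← Finset.sum_add_distrib]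
      refine Finset.sum_congr rfl fun j _ => ?_
      ring
    rw [this, hπsum, hQ]; ring
  have hL3 : L = ∑ m ∈ Finset.range (M+1), θ m * (Q + ((m:ℝ) - 1))
      + ∑ m ∈ Finset.range (M+1), θ m * π (-(m:ℤ)) := by
    rw [hL2, ← Finset.sum_add_distrib]
    refine Finset.sum_congr rfl fun m _ => ?_
    rw [hinner m]; ring
  -- Step 4: the π(-m) sum is θ 0 * π 0
  have hneg : ∑ m ∈ Finset.range (M+1), θ m * π (-(m:ℤ)) = θ 0 * π 0 := by
    rw [Finset.sum_eq_single_of_mem 0 (by simp)]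
    · norm_num
    · intro m _ hm0
      have : π (-(m:ℤ)) = 0 := hπout _ (by left; omega)
      rw [this, mul_zero]
  -- Step 5: expand the first sum
  have hfirst : ∑ m ∈ Finset.range (M+1), θ m * (Q + ((m:ℝ) - 1))
      = Q + ∑ m ∈ Finset.range (M+1), ((m:ℝ) - 1) * θ m := by
    have : ∀ m ∈ Finset.range (M+1), θ m * (Q + ((m:ℝ) - 1))
        = Q * θ m + ((m:ℝ) - 1) * θ m := fun m _ => by ring
    rw [Finset.sum_congr rfl this, Finset.sum_add_distrib, ← Finset.mul_sum, hθsum]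
    ring
  -- Step 6: the tail sum equals ς
  have htail : ∑ m ∈ Finset.range (M+1), ((m:ℝ) - 1) * θ m = ς := by
    have hsplit : Finset.range (M+1) = insert 0 (insert 1 (Finset.Icc 2 M)) := by
      ext x
      simp only [Finset.mem_range, Finset.mem_insert, Finset.mem_Icc]
      omega
    have h0 : (0:ℕ) ∉ insert 1 (Finset.Icc 2 M) := by
      simp only [Finset.mem_insert, Finset.mem_Icc]; omega
    have h1 : (1:ℕ) ∉ Finset.Icc 2 M := by simp
    rw [hsplit, Finset.sum_insert h0, Finset.sum_insert h1]
    have hmap : ∑ m ∈ Finset.Icc 2 M, ((m:ℝ) - 1) * θ m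
        = ∑ m ∈ Finset.Icc 1 (M-1), (m:ℝ) * θ (m+1) := by
      have hIcc : Finset.Icc 2 M = (Finset.Icc 1 (M-1)).map (addLeftEmbedding 1) := by
        rw [Finset.map_add_left_Icc]
        congr 1
        omega
      rw [hIcc, Finset.sum_map]
      refine Finset.sum_congr rfl fun j hj => ?_
      simp only [addLeftEmbedding_apply]
      have : (1 + j : ℕ) = j + 1 := by omega
      rw [this]
      push_cast
      ring
    rw [hmap, hς]
    norm_num
    ring
  rw [hL3, hneg, hfirst, htail]
  ring
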